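/- Assume q ≠ 1. Let (τ_{n+1})_{n≥0} be a Jones–Markov trace on the tower (TL_n(q))_{n≥0}, and define ρ_1 := τ_1 and ρ_{n+1} := τ_{n+1} ∘ E_n for n ≥ 1. Then (ρ_n)_{n≥1} is an affine Markov trace on the tower (TLhat_n(q))_{n≥1}. -/

import Mathlib

namespace AffineTL

open FreeAlgebra

/-- Cyclic successor on `Fin m`. -/
def csucc {m : ℕ} (i : Fin m) : Fin m := ⟨(i.val + 1) % m, Nat.mod_lt _ i.pos⟩

/-- The defining relations of the affine Temperley–Lieb algebra `TLhat_m(q)` with `m`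
generators (indexed so that `g_{σ_i}` has index `i - 1` and `g_{a_m}` has index `m - 1`).
For `m = 1` the unique generator is set to `0`, so that `TLhat_1(q) ≅ K`. -/
inductive ATLRel {K : Type*} [CommRing K] (q : K) (m : ℕ) :
    FreeAlgebra K (Fin m) → FreeAlgebra K (Fin m) → Prop
  | degen (h : m ≤ 1) (i : Fin m) : ATLRel q m (ι K i) 0
  | quad (h : 2 ≤ m) (i : Fin m) :
      ATLRel q m (ι K i * ι K i) ((q - 1) • ι K i + algebraMap K _ q)
  | comm (h : 3 ≤ m) (i j : Fin m) (h1 : i ≠ j) (h2 : j ≠ csucc i) (h3 : i ≠ csucc j) :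
      ATLRel q m (ι K i * ι K j) (ι K j * ι K i)
  | braid (h : 3 ≤ m) (i : Fin m) :
      ATLRel q m (ι K i * ι K (csucc i) * ι K i) (ι K (csucc i) * ι K i * ι K (csucc i))
  | vrel (h : 3 ≤ m) (i : Fin m) :
      ATLRel q m (ι K i * ι K (csucc i) * ι K i + ι K i * ι K (csucc i) + ι K (csucc i) * ι K i
        + ι K i + ι K (csucc i) + 1) 0

/-- The affine Temperley–Lieb algebra `TLhat_m(q)` of type `Ã`. -/
abbrev ATL (K : Type*) [CommRing K] (q : K) (m : ℕ) : Type _ := RingQuot (ATLRel q m)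

/-- The generators of `TLhat_m(q)`. -/
noncomputable def g {K : Type*} [CommRing K] (q : K) (m : ℕ) (i : Fin m) : ATL K q m :=
  RingQuot.mkAlgHom K (ATLRel q m) (ι K i)

/-- The defining relations of the type `A` Temperley–Lieb algebra `TL_n(q)` with `n`
generators (`g_{σ_i}` has index `i - 1`). -/
inductive TLARel {K : Type*} [CommRing K] (q : K) (n : ℕ) :
    FreeAlgebra K (Fin n) → FreeAlgebra K (Fin n) → Prop
  | quad (i : Fin n) :
      TLARel q n (ι K i * ι K i) ((q - 1) • ι K i + algebraMap K _ q)
  | comm (i j : Fin n) (h : i.val + 2 ≤ j.val ∨ j.val + 2 ≤ i.val) :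
      TLARel q n (ι K i * ι K j) (ι K j * ι K i)
  | braid (i j : Fin n) (h : j.val = i.val + 1) :
      TLARel q n (ι K i * ι K j * ι K i) (ι K j * ι K i * ι K j)
  | vrel (i j : Fin n) (h : j.val = i.val + 1) :
      TLARel q n (ι K i * ι K j * ι K i + ι K i * ι K j + ι K j * ι K i
        + ι K i + ι K j + 1) 0

/-- The type `A` Temperley–Lieb algebra `TL_n(q)`. -/
abbrev TLA (K : Type*) [CommRing K] (q : K) (n : ℕ) : Type _ := RingQuot (TLARel q n)

/-- The generators of `TL_n(q)`. -/
noncomputable def gA {K : Type*} [CommRing K] (q : K) (n : ℕ) (i : Fin n) : TLA K q n :=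
  RingQuot.mkAlgHom K (TLARel q n) (ι K i)

/-- The formal inverse `q⁻¹·(x − (q−1))` of an element satisfying `x² = (q−1)x + q`. -/
noncomputable def qinv {K : Type*} [CommRing K] (q : K) {A : Type*} [Ring A] [Algebra K A]
    (x : A) : A :=
  Ring.inverse q • (x - algebraMap K A (q - 1))

/-- A trace on a `K`-algebra: a `K`-linear form vanishing on commutators. -/
def IsTrace {K : Type*} [CommRing K] {A : Type*} [Ring A] [Algebra K A]
    (τ : A →ₗ[K] K) : Prop :=
  ∀ x y : A, τ (x * y) = τ (y * x)

/-- The element `G = g_{σ_n}⋯g_{σ_1}·g_{a_{n+1}}` of `TLhat_{n+1}(q)`. -/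
noncomputable def bigG {K : Type*} [CommRing K] (q : K) (n : ℕ) : ATL K q (n + 1) :=
  (List.ofFn fun j : Fin n => g q (n + 1) ⟨n - 1 - j.val, by omega⟩).prod *
    g q (n + 1) (Fin.last n)

/-- The inverse `G⁻¹ = g_{a_{n+1}}⁻¹·g_{σ_1}⁻¹⋯g_{σ_n}⁻¹` of `bigG`. -/
noncomputable def bigGinv {K : Type*} [CommRing K] (q : K) (n : ℕ) : ATL K q (n + 1) :=
  qinv q (g q (n + 1) (Fin.last n)) *
    (List.ofFn fun j : Fin n => qinv q (g q (n + 1) j.castSucc)).prod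

end AffineTL

namespace AffineTL

/-- `F` is the canonical homomorphism `F_m : TLhat_m(q) → TLhat_{m+1}(q)`:
`t_{σ_i} ↦ g_{σ_i}` for `1 ≤ i ≤ m−1` and `t_{a_m} ↦ g_{σ_m}·g_{a_{m+1}}·g_{σ_m}⁻¹`. -/
def isF {K : Type*} [CommRing K] (q : K) (m : ℕ) (hm : 2 ≤ m)
    (F : ATL K q m →ₐ[K] ATL K q (m + 1)) : Prop :=
  (∀ i : ℕ, ∀ hi : i < m - 1,
      F (g q m ⟨i, by omega⟩) = g q (m + 1) ⟨i, by omega⟩) ∧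
  F (g q m ⟨m - 1, by omega⟩) =
    g q (m + 1) ⟨m - 1, by omega⟩ * g q (m + 1) ⟨m, by omega⟩ *
      qinv q (g q (m + 1) ⟨m - 1, by omega⟩)

end AffineTL

namespace AffineTL

/-- `E` is the canonical surjection `E_n : TLhat_{n+1}(q) → TL_n(q)`:
`g_{σ_i} ↦ g_{σ_i}` for `1 ≤ i ≤ n` and
`g_{a_{n+1}} ↦ g_{σ_1}⋯g_{σ_{n−1}}·g_{σ_n}·g_{σ_{n−1}}⁻¹⋯g_{σ_1}⁻¹`. -/
def isE {K : Type*} [CommRing K] (q : K) (n : ℕ) (hn : 1 ≤ n)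
    (E : ATL K q (n + 1) →ₐ[K] TLA K q n) : Prop :=
  (∀ i : Fin n, E (g q (n + 1) i.castSucc) = gA q n i) ∧
  E (g q (n + 1) (Fin.last n)) =
    (List.ofFn fun j : Fin (n - 1) => gA q n ⟨j.val, by omega⟩).prod *
      gA q n ⟨n - 1, by omega⟩ *
      (List.ofFn fun j : Fin (n - 1) => qinv q (gA q n ⟨n - 2 - j.val, by omega⟩)).prod

end AffineTL

namespace AffineTL

/-- The conditions defining an affine Markov trace on the tower `(TLhat_n(q))_{n ≥ 1}`.
Here `σ m` stands for the component `τ̂_{m+1}` defined on `TLhat_{m+1}(q)`, and `F m` is the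
homomorphism `F_m : TLhat_m(q) → TLhat_{m+1}(q)`: each component is a trace, the first
component is normalized, and the Markov conditions
`τ̂_{n+1}(F_n(h)·T_{σ_n}^{±1}) = τ̂_n(h)` hold for all `n ≥ 1`. -/
def IsAffineMarkovTrace {K : Type*} [CommRing K] (q sq : K)
    (F : ∀ m : ℕ, ATL K q m →ₐ[K] ATL K q (m + 1))
    (σ : ∀ m : ℕ, ATL K q (m + 1) →ₗ[K] K) : Prop :=
  (∀ m, IsTrace (σ m)) ∧
  σ 0 1 = 1 ∧
  (∀ m : ℕ, ∀ h : ATL K q (m + 1),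
    σ (m + 1) (F (m + 1) h * (sq • g q (m + 2) ⟨m, by omega⟩)) = σ m h) ∧
  (∀ m : ℕ, ∀ h : ATL K q (m + 1),
    σ (m + 1) (F (m + 1) h *
      (Ring.inverse sq • qinv q (g q (m + 2) ⟨m, by omega⟩))) = σ m h)

/-- Invariance of a family of traces under the Dynkin automorphisms `ψ_n`. -/
def IsDynkinInvariant {K : Type*} [CommRing K] {q : K}
    (ψ : ∀ m : ℕ, ATL K q m ≃ₐ[K] ATL K q m)
    (σ : ∀ m : ℕ, ATL K q (m + 1) →ₗ[K] K) : Prop :=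
  ∀ m : ℕ, ∀ x : ATL K q (m + 1), σ m (ψ (m + 1) x) = σ m x

end AffineTL
namespace AffineTLAux
open AffineTL FreeAlgebra

variable {K : Type*} [CommRing K] {q : K}

section basic
variable {A : Type*} [Ring A] [Algebra K A]

theorem smul_algebraMap (r s : K) : r • (algebraMap K A s) = algebraMap K A (r * s) := by
  rw [Algebra.smul_def, ← map_mul]

theorem qinv_mul (hq : IsUnit q) (x : A)
    (hx : x * x = (q - 1) • x + algebraMap K A q) : qinv q x * x = 1 := by
  have hxc : algebraMap K A (q-1) * x = (q-1) • x := by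
    rw [Algebra.algebraMap_eq_smul_one, smul_mul_assoc, one_mul]
  rw [qinv, smul_mul_assoc, sub_mul, hx, hxc, add_sub_cancel_left, smul_algebraMap,
    Ring.inverse_mul_cancel _ hq, map_one]

theorem mul_qinv (hq : IsUnit q) (x : A)
    (hx : x * x = (q - 1) • x + algebraMap K A q) : x * qinv q x = 1 := by
  have hxc : x * algebraMap K A (q-1) = (q-1) • x := by
    rw [Algebra.algebraMap_eq_smul_one, mul_smul_comm, mul_one]
  rw [qinv, mul_smul_comm, mul_sub, hx, hxc, add_sub_cancel_left, smul_algebraMap,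
    Ring.inverse_mul_cancel _ hq, map_one]

theorem map_qinv {B : Type*} [Ring B] [Algebra K B] (f : A →ₐ[K] B) (x : A) :
    f (qinv q x) = qinv q (f x) := by
  rw [qinv, qinv, map_smul, map_sub, AlgHom.commutes]

theorem commute_qinv_right (x y : A) (h : Commute x y) : Commute x (qinv q y) :=
  ((h.sub_right (Algebra.commute_algebraMap_right _ _)).smul_right _)

/-- Conjugation by an invertible element, as an algebra homomorphism. -/
noncomputable def conjHom (u v : A) (huv : u * v = 1) (hvu : v * u = 1) : A →ₐ[K] A where
  toFun x := u * x * v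
  map_one' := by show u * 1 * v = 1; rw [mul_one, huv]
  map_mul' x y := by
    show u * (x * y) * v = (u * x * v) * (u * y * v)
    have h1 : v * (u * y * v) = y * v := by rw [← mul_assoc, ← mul_assoc, hvu, one_mul]
    conv_rhs => rw [mul_assoc (u*x) v (u*y*v), h1, ← mul_assoc (u*x) y v, mul_assoc u x y]
  map_zero' := by show u * 0 * v = 0; rw [mul_zero, zero_mul]
  map_add' x y := by show u * (x + y) * v = _; rw [mul_add, add_mul]
  commutes' r := by
    show u * algebraMap K A r * v = _
    rw [← Algebra.commutes r u, mul_assoc, huv, mul_one]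

end basic

section TLAfacts
variable {n : ℕ}

theorem quadA (i : Fin n) :
    gA q n i * gA q n i = (q - 1) • gA q n i + algebraMap K (TLA K q n) q := by
  have := RingQuot.mkAlgHom_rel K (TLARel.quad (q := q) i)
  rwa [map_mul, map_add, map_smul, AlgHom.commutes] at this

theorem commA {i j : Fin n} (h : i.val + 2 ≤ j.val ∨ j.val + 2 ≤ i.val) :
    Commute (gA q n i) (gA q n j) := by
  have := RingQuot.mkAlgHom_rel K (TLARel.comm (q := q) i j h)
  rw [map_mul, map_mul] at this
  exact this

theorem braidA {i j : Fin n} (h : j.val = i.val + 1) :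
    gA q n i * gA q n j * gA q n i = gA q n j * gA q n i * gA q n j := by
  have := RingQuot.mkAlgHom_rel K (TLARel.braid (q := q) i j h)
  simp only [map_mul] at this
  exact this

theorem gA_mul_qinv (hq : IsUnit q) (i : Fin n) : gA q n i * qinv q (gA q n i) = 1 :=
  mul_qinv hq _ (quadA i)

theorem qinv_mul_gA (hq : IsUnit q) (i : Fin n) : qinv q (gA q n i) * gA q n i = 1 :=
  qinv_mul hq _ (quadA i)

section Wfacts
variable (q)
variable {n : ℕ}

/-- The product `g_0 g_1 ⋯ g_{k-1}` in `TLA K q n`. -/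
noncomputable def W (n k : ℕ) (hk : k ≤ n) : TLA K q n :=
  (List.ofFn fun j : Fin k => gA q n ⟨j.val, Nat.lt_of_lt_of_le j.isLt hk⟩).prod

/-- The product `g_{k-1}⁻¹ ⋯ g_0⁻¹` in `TLA K q n`. -/
noncomputable def Winv (n k : ℕ) (hk : k ≤ n) : TLA K q n :=
  (List.ofFn fun j : Fin k =>
    qinv q (gA q n ⟨k - 1 - j.val, by have := j.isLt; omega⟩)).prod

variable {q}

theorem gA_congr {a b : ℕ} (ha : a < n) (hb : b < n) (h : a = b) :
    gA q n ⟨a, ha⟩ = gA q n ⟨b, hb⟩ := by subst h; rfl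

theorem W_zero (h : 0 ≤ n) : W q n 0 h = 1 := rfl

theorem Winv_zero (h : 0 ≤ n) : Winv q n 0 h = 1 := rfl

theorem W_succ {k : ℕ} (hk : k + 1 ≤ n) :
    W q n (k+1) hk = W q n k (by omega) * gA q n ⟨k, by omega⟩ := by
  rw [W, List.ofFn_succ', List.concat_eq_append, List.prod_append, List.prod_cons,
    List.prod_nil, mul_one, W]
  rfl

theorem Winv_succ {k : ℕ} (hk : k + 1 ≤ n) :
    Winv q n (k+1) hk = qinv q (gA q n ⟨k, by omega⟩) * Winv q n k (by omega) := by
  rw [Winv, List.ofFn_succ, List.prod_cons]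
  congr 1
  rw [Winv]
  congr 1
  congr 1
  funext j
  apply congrArg (qinv q)
  apply congrArg (gA q n)
  apply Fin.ext
  show k + 1 - 1 - (j : ℕ).succ = k - 1 - (j : ℕ)
  omega

theorem W_mul_Winv (hq : IsUnit q) (k : ℕ) (hk : k ≤ n) :
    W q n k hk * Winv q n k hk = 1 := by
  induction k with
  | zero => rw [W_zero, Winv_zero, mul_one]
  | succ k ih =>
    rw [W_succ hk, Winv_succ hk, mul_assoc, ← mul_assoc (gA q n ⟨k, _⟩),
      gA_mul_qinv hq, one_mul, ih]

theorem Winv_mul_W (hq : IsUnit q) (k : ℕ) (hk : k ≤ n) :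
    Winv q n k hk * W q n k hk = 1 := by
  induction k with
  | zero => rw [W_zero, Winv_zero, mul_one]
  | succ k ih =>
    rw [W_succ hk, Winv_succ hk, mul_assoc, ← mul_assoc (Winv q n k _),
      ih, one_mul, qinv_mul_gA hq]

theorem commute_W {a : ℕ} (ha : a < n) {k : ℕ} (hk : k ≤ n) (h : k + 1 ≤ a) :
    Commute (gA q n ⟨a, ha⟩) (W q n k hk) := by
  apply Commute.list_prod_right
  intro y hy
  rw [List.mem_ofFn] at hy
  obtain ⟨j, rfl⟩ := hy
  exact commA (Or.inr (show (j : ℕ) + 2 ≤ a by have := j.isLt; omega))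

theorem commute_qinv_Winv (hq : IsUnit q) {a : ℕ} (ha : a < n) {k : ℕ} (hk : k ≤ n)
    (h : k + 1 ≤ a) : Commute (qinv q (gA q n ⟨a, ha⟩)) (Winv q n k hk) := by
  apply Commute.list_prod_right
  intro y hy
  rw [List.mem_ofFn] at hy
  obtain ⟨j, rfl⟩ := hy
  have h1 : Commute (gA q n ⟨a, ha⟩) (gA q n ⟨k - 1 - (j : ℕ), by have := j.isLt; omega⟩) :=
    commA (Or.inr (show (k - 1 - (j : ℕ)) + 2 ≤ a by have := j.isLt; omega))
  exact (commute_qinv_right _ _ (commute_qinv_right _ _ h1).symm).symm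

end Wfacts

theorem W_shift {k i : ℕ} (hk : k ≤ n) (hi : i + 2 ≤ k) :
    W q n k hk * gA q n ⟨i, by omega⟩ = gA q n ⟨i + 1, by omega⟩ * W q n k hk := by
  induction k, hi using Nat.le_induction with
  | base =>
    have hb := braidA (q := q) (n := n) (i := ⟨i, by omega⟩) (j := ⟨i+1, by omega⟩) rfl
    have hc : Commute (gA q n ⟨i+1, by omega⟩) (W q n i (by omega)) :=
      commute_W (by omega) (by omega) (by omega)
    have hc' : ∀ z, gA q n ⟨i+1, by omega⟩ * (W q n i (by omega) * z)
        = W q n i (by omega) * (gA q n ⟨i+1, by omega⟩ * z) := fun z => by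
      rw [← mul_assoc, hc.eq, mul_assoc]
    simp only [mul_assoc] at hb
    simp only [W_succ, mul_assoc]
    rw [hb, ← hc']
  | succ k hik ih =>
    have hc : Commute (gA q n ⟨i, by omega⟩) (gA q n ⟨k, by omega⟩) :=
      commA (Or.inl (show i + 2 ≤ k by omega))
    have ih' : ∀ z, W q n k (by omega) * (gA q n ⟨i, by omega⟩ * z)
        = gA q n ⟨i+1, by omega⟩ * (W q n k (by omega) * z) := fun z => by
      rw [← mul_assoc, ih (by omega), mul_assoc]
    simp only [W_succ, mul_assoc]
    rw [← hc.eq, ih']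

theorem WS {k : ℕ} (hk : k + 1 ≤ n) :
    W q n (k+1) hk * W q n k (by omega) * gA q n ⟨k, by omega⟩
      = gA q n ⟨0, by omega⟩ * (W q n (k+1) hk * W q n k (by omega)) := by
  induction k with
  | zero =>
    rw [W_zero, mul_one, W_succ, W_zero, one_mul]
  | succ k ih =>
    have hb := braidA (q := q) (n := n) (i := ⟨k, by omega⟩) (j := ⟨k+1, by omega⟩) rfl
    have hb' : gA q n ⟨k+1, by omega⟩ * (gA q n ⟨k, by omega⟩ * gA q n ⟨k+1, by omega⟩)
        = gA q n ⟨k, by omega⟩ * (gA q n ⟨k+1, by omega⟩ * gA q n ⟨k, by omega⟩) := by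
      simp only [← mul_assoc]; exact hb.symm
    have hcW : Commute (gA q n ⟨k+1, by omega⟩) (W q n k (by omega)) :=
      commute_W (by omega) (by omega) (by omega)
    have hcW' : ∀ z, gA q n ⟨k+1, by omega⟩ * (W q n k (by omega) * z)
        = W q n k (by omega) * (gA q n ⟨k+1, by omega⟩ * z) := fun z => by
      rw [← mul_assoc, hcW.eq, mul_assoc]
    have ih' := fun z : TLA K q n => congrArg (· * z) (ih (by omega))
    simp only [W_succ, mul_assoc] at ih' ⊢
    rw [hcW', hb', ih', hcW']

variable (q) in
/-- The element `g_0 ⋯ g_{k-1} · g_k · g_{k-1}⁻¹ ⋯ g_0⁻¹` of `TLA K q n`. -/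
noncomputable def Aelt (n k : ℕ) (hk : k < n) : TLA K q n :=
  W q n k hk.le * gA q n ⟨k, hk⟩ * Winv q n k hk.le

theorem cancel_gA (hq : IsUnit q) {a : ℕ} (ha : a < n) (z : TLA K q n) :
    gA q n ⟨a, ha⟩ * (qinv q (gA q n ⟨a, ha⟩) * z) = z := by
  rw [← mul_assoc, gA_mul_qinv hq, one_mul]

theorem cancel_qinv (hq : IsUnit q) {a : ℕ} (ha : a < n) (z : TLA K q n) :
    qinv q (gA q n ⟨a, ha⟩) * (gA q n ⟨a, ha⟩ * z) = z := by
  rw [← mul_assoc, qinv_mul_gA hq, one_mul]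

theorem conjW_lt (hq : IsUnit q) {i : ℕ} (hi : i + 1 < n) :
    W q n n le_rfl * gA q n ⟨i, by omega⟩ * Winv q n n le_rfl = gA q n ⟨i+1, hi⟩ := by
  rw [W_shift le_rfl (by omega), mul_assoc, W_mul_Winv hq, mul_one]

theorem conjW_last (hq : IsUnit q) (k : ℕ) :
    W q (k+1) (k+1) le_rfl * gA q (k+1) ⟨k, by omega⟩ * Winv q (k+1) (k+1) le_rfl
      = Aelt q (k+1) k (by omega) := by
  simp only [Aelt, W_succ, Winv_succ, mul_assoc]
  rw [cancel_gA hq]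

theorem conjW_A (hq : IsUnit q) (k : ℕ) :
    W q (k+1) (k+1) le_rfl * Aelt q (k+1) k (by omega) * Winv q (k+1) (k+1) le_rfl
      = gA q (k+1) ⟨0, by omega⟩ := by
  have hS := fun z : TLA K q (k+1) => congrArg (· * z) (WS (q := q) (n := k+1) (k := k) le_rfl)
  have h2 : ∀ z : TLA K q (k+1), W q (k+1) k (by omega) * (Winv q (k+1) k (by omega) * z) = z :=
    fun z => by rw [← mul_assoc, W_mul_Winv hq, one_mul]
  simp only [mul_assoc] at hS
  simp only [Aelt, mul_assoc]
  rw [hS, h2, W_mul_Winv hq, mul_one]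

theorem step_down (hq : IsUnit q) {k : ℕ} (hk : k + 1 < n) :
    gA q n ⟨k+1, hk⟩ * Aelt q n (k+1) hk * qinv q (gA q n ⟨k+1, hk⟩)
      = Aelt q n k (by omega) := by
  have hb := braidA (q := q) (n := n) (i := ⟨k, by omega⟩) (j := ⟨k+1, by omega⟩) rfl
  have hba : ∀ z : TLA K q n, gA q n ⟨k+1, by omega⟩ * (gA q n ⟨k, by omega⟩ *
      (gA q n ⟨k+1, by omega⟩ * z)) = gA q n ⟨k, by omega⟩ * (gA q n ⟨k+1, by omega⟩ *
      (gA q n ⟨k, by omega⟩ * z)) := fun z => by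
    rw [← mul_assoc, ← mul_assoc, ← hb, mul_assoc, mul_assoc]
  have hcb : Commute (gA q n ⟨k+1, by omega⟩) (W q n k (by omega)) :=
    commute_W (by omega) (by omega) (by omega)
  have hcb' : ∀ z, gA q n ⟨k+1, by omega⟩ * (W q n k (by omega) * z)
      = W q n k (by omega) * (gA q n ⟨k+1, by omega⟩ * z) := fun z => by
    rw [← mul_assoc, hcb.eq, mul_assoc]
  have hc2 : Winv q n k (by omega) * qinv q (gA q n ⟨k+1, by omega⟩)
      = qinv q (gA q n ⟨k+1, by omega⟩) * Winv q n k (by omega) :=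
    ((commute_qinv_Winv hq (by omega) (by omega) (by omega)).symm).eq
  simp only [Aelt, W_succ, Winv_succ, mul_assoc]
  rw [hc2, hcb', hba, cancel_gA hq, cancel_gA hq]

theorem atl_hom_ext {m : ℕ} {B : Type*} [Semiring B] [Algebra K B]
    {f f' : ATL K q m →ₐ[K] B} (h : ∀ i : Fin m, f (g q m i) = f' (g q m i)) : f = f' := by
  apply RingQuot.ringQuot_ext'
  apply FreeAlgebra.hom_ext
  funext i
  exact h i

theorem g_atl1_eq_zero (i : Fin 1) : g q 1 i = 0 := by
  have := RingQuot.mkAlgHom_rel K (ATLRel.degen (q := q) (le_refl 1) i)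
  rwa [map_zero] at this

theorem atl1_scalar (x : ATL K q 1) : ∃ c : K, algebraMap K (ATL K q 1) c = x := by
  obtain ⟨y, rfl⟩ := RingQuot.mkAlgHom_surjective K (ATLRel q 1) x
  induction y using FreeAlgebra.induction with
  | grade0 c => exact ⟨c, by rw [AlgHom.commutes]⟩
  | grade1 i => exact ⟨0, by rw [map_zero]; exact (g_atl1_eq_zero i).symm⟩
  | mul a b ha hb =>
    obtain ⟨c, hc⟩ := ha; obtain ⟨d, hd⟩ := hb
    exact ⟨c * d, by rw [map_mul, map_mul, hc, hd]⟩
  | add a b ha hb =>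
    obtain ⟨c, hc⟩ := ha; obtain ⟨d, hd⟩ := hb
    exact ⟨c + d, by rw [map_add, map_add, hc, hd]⟩

theorem csucc_of_lt {m : ℕ} {i : Fin m} (h : i.val + 1 < m) :
    csucc i = ⟨i.val + 1, h⟩ := by
  apply Fin.ext
  show (i.val + 1) % m = i.val + 1
  exact Nat.mod_eq_of_lt h

theorem csucc_last {m : ℕ} {i : Fin m} (h : i.val + 1 = m) :
    csucc i = ⟨0, by omega⟩ := by
  apply Fin.ext
  show (i.val + 1) % m = 0
  rw [h, Nat.mod_self]
end TLAfacts
end AffineTLAux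

open AffineTL AffineTLAux in
/-- Corollary 5.2.5: the family `ρ_{n+1} := τ_{n+1} ∘ E_n` obtained from a
Jones–Markov trace on the tower `(TL_n(q))` is an affine Markov trace on the tower
`(TLhat_n(q))`, invariant under the Dynkin automorphisms. -/
theorem statement14 {K : Type*} [CommRing K] [IsDomain K] [CharZero K]
    (q sq : K) (hsq : sq * sq = q) (hq : IsUnit q) (hq1 : IsUnit (q + 1)) (hqne : q ≠ 1)
    (F : ∀ m : ℕ, ATL K q m →ₐ[K] ATL K q (m + 1))
    (hF : ∀ m : ℕ, ∀ hm : 2 ≤ m, isF q m hm (F m))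
    (E : ∀ m : ℕ, ATL K q (m + 1) →ₐ[K] TLA K q m)
    (hE : ∀ m : ℕ, ∀ hm : 1 ≤ m, isE q m hm (E m))
    (ψ : ∀ m : ℕ, ATL K q m ≃ₐ[K] ATL K q m)
    (hψ : ∀ m : ℕ, ∀ i : Fin m, (ψ m) (g q m i) = g q m (csucc i))
    (τ : ∀ m : ℕ, TLA K q m →ₗ[K] K)
    (htr : ∀ m, IsTrace (τ m)) (hτ1 : τ 0 1 = 1)
    (ι : ∀ m : ℕ, TLA K q m →ₐ[K] TLA K q (m + 1))
    (hι : ∀ m : ℕ, ∀ i : Fin m, ι m (gA q m i) = gA q (m + 1) i.castSucc)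
    (hτM : ∀ m : ℕ, ∀ h : TLA K q m,
      τ (m + 1) (ι m h * (sq • gA q (m + 1) (Fin.last m))) = τ m h)
    (hτM' : ∀ m : ℕ, ∀ h : TLA K q m,
      τ (m + 1) (ι m h * (Ring.inverse sq • qinv q (gA q (m + 1) (Fin.last m)))) = τ m h) :
    IsAffineMarkovTrace q sq F (fun m => (τ m).comp (E m).toLinearMap) ∧
    IsDynkinInvariant ψ (fun m => (τ m).comp (E m).toLinearMap) := by
  -- ι maps the W-products to W-products
  have hιW : ∀ m k (hk : k ≤ m), ι m (W q m k hk) = W q (m+1) k (by omega) := by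
    intro m k hk
    rw [W, W, map_list_prod, List.map_ofFn]
    congr 1
    congr 1
    funext j
    show ι m (gA q m ⟨j.val, _⟩) = gA q (m+1) ⟨j.val, _⟩
    rw [hι m ⟨j.val, Nat.lt_of_lt_of_le j.isLt hk⟩]
    rfl
  have hιWinv : ∀ m k (hk : k ≤ m), ι m (Winv q m k hk) = Winv q (m+1) k (by omega) := by
    intro m k hk
    rw [Winv, Winv, map_list_prod, List.map_ofFn]
    congr 1
    congr 1
    funext j
    show ι m (qinv q (gA q m ⟨k - 1 - j.val, _⟩)) = qinv q (gA q (m+1) ⟨k - 1 - j.val, _⟩)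
    rw [map_qinv, hι m ⟨k - 1 - j.val, by have := j.isLt; omega⟩]
    rfl
  have hιA : ∀ m k (hk : k < m), ι m (Aelt q m k hk) = Aelt q (m+1) k (by omega) := by
    intro m k hk
    rw [Aelt, Aelt, map_mul, map_mul, hιW, hιWinv, hι m ⟨k, hk⟩]
    rfl
  -- key hom identity : E (k+2) ∘ F (k+2) = ι (k+1) ∘ E (k+1)
  have keyEF : ∀ k : ℕ, (E (k+2)).comp (F (k+2)) = (ι (k+1)).comp (E (k+1)) := by
    intro k
    apply atl_hom_ext
    intro i
    obtain ⟨iv, hlt⟩ := i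
    simp only [AlgHom.comp_apply]
    by_cases hi : iv < k + 1
    · have hFi : F (k+2) (g q (k+2) ⟨iv, hlt⟩) = g q (k+3) ⟨iv, by omega⟩ :=
        (hF (k+2) (by omega)).1 iv (by omega)
      have h1 : E (k+2) (g q (k+3) ⟨iv, by omega⟩) = gA q (k+2) ⟨iv, by omega⟩ :=
        (hE (k+2) (by omega)).1 ⟨iv, by omega⟩
      have h2 : E (k+1) (g q (k+2) ⟨iv, hlt⟩) = gA q (k+1) ⟨iv, by omega⟩ :=
        (hE (k+1) (by omega)).1 ⟨iv, by omega⟩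
      rw [hFi, h1, h2, hι (k+1) ⟨iv, by omega⟩]
      rfl
    · have hiv : iv = k + 1 := by omega
      subst hiv
      have hFi : F (k+2) (g q (k+2) ⟨k+1, hlt⟩)
          = g q (k+3) ⟨k+1, by omega⟩ * g q (k+3) ⟨k+2, by omega⟩
            * qinv q (g q (k+3) ⟨k+1, by omega⟩) :=
        (hF (k+2) (by omega)).2
      have h1 : E (k+2) (g q (k+3) ⟨k+1, by omega⟩) = gA q (k+2) ⟨k+1, by omega⟩ :=
        (hE (k+2) (by omega)).1 ⟨k+1, by omega⟩
      have h2 : E (k+2) (g q (k+3) ⟨k+2, by omega⟩) = Aelt q (k+2) (k+1) (by omega) :=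
        (hE (k+2) (by omega)).2
      have h3 : E (k+1) (g q (k+2) ⟨k+1, hlt⟩) = Aelt q (k+1) k (by omega) :=
        (hE (k+1) (by omega)).2
      rw [hFi, map_mul, map_mul, map_qinv, h1, h2, h3, hιA,
        step_down hq (show k + 1 < k + 2 by omega)]
  -- key hom identity : E (k+1) ∘ ψ (k+2) = conj ∘ E (k+1)
  have keyPsi : ∀ k : ℕ,
      (E (k+1)).comp (ψ (k+2)).toAlgHom
        = (conjHom (W q (k+1) (k+1) le_rfl) (Winv q (k+1) (k+1) le_rfl)
            (W_mul_Winv hq _ _) (Winv_mul_W hq _ _)).comp (E (k+1)) := by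
    intro k
    apply atl_hom_ext
    intro i
    obtain ⟨iv, hlt⟩ := i
    simp only [AlgHom.comp_apply, AlgEquiv.toAlgHom_eq_coe, AlgHom.coe_coe]
    change E (k+1) (ψ (k+2) (g q (k+2) ⟨iv, hlt⟩)) = _
    rw [hψ (k+2) ⟨iv, hlt⟩]
    by_cases hik : iv < k
    · rw [csucc_of_lt (show iv + 1 < k + 2 by omega)]
      have h1 : E (k+1) (g q (k+2) ⟨iv + 1, by omega⟩) = gA q (k+1) ⟨iv + 1, by omega⟩ :=
        (hE (k+1) (by omega)).1 ⟨iv + 1, by omega⟩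
      have h2 : E (k+1) (g q (k+2) ⟨iv, hlt⟩) = gA q (k+1) ⟨iv, by omega⟩ :=
        (hE (k+1) (by omega)).1 ⟨iv, by omega⟩
      rw [h1, h2]
      show _ = W q (k+1) (k+1) le_rfl * gA q (k+1) ⟨iv, by omega⟩ * Winv q (k+1) (k+1) le_rfl
      rw [conjW_lt hq (show iv + 1 < k + 1 by omega)]
    · by_cases hik2 : iv = k
      · subst hik2
        rw [csucc_of_lt (show iv + 1 < iv + 2 by omega)]
        have h1 : E (iv+1) (g q (iv+2) ⟨iv + 1, by omega⟩) = Aelt q (iv+1) iv (by omega) :=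
          (hE (iv+1) (by omega)).2
        have h2 : E (iv+1) (g q (iv+2) ⟨iv, hlt⟩) = gA q (iv+1) ⟨iv, by omega⟩ :=
          (hE (iv+1) (by omega)).1 ⟨iv, by omega⟩
        rw [h1, h2]
        show _ = W q (iv+1) (iv+1) le_rfl * gA q (iv+1) ⟨iv, by omega⟩ * Winv q (iv+1) (iv+1) le_rfl
        rw [conjW_last hq]
      · have hiv : iv = k + 1 := by omega
        subst hiv
        rw [csucc_last (show k + 1 + 1 = k + 2 by omega)]
        have h1 : E (k+1) (g q (k+2) ⟨0, by omega⟩) = gA q (k+1) ⟨0, by omega⟩ :=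
          (hE (k+1) (by omega)).1 ⟨0, by omega⟩
        have h2 : E (k+1) (g q (k+2) ⟨k+1, hlt⟩) = Aelt q (k+1) k (by omega) :=
          (hE (k+1) (by omega)).2
        rw [h1, h2]
        show _ = W q (k+1) (k+1) le_rfl * Aelt q (k+1) k (by omega) * Winv q (k+1) (k+1) le_rfl
        rw [conjW_A hq]
  refine ⟨⟨?_, ?_, ?_, ?_⟩, ?_⟩
  · -- trace property
    intro m x y
    show τ m (E m (x * y)) = τ m (E m (y * x))
    have h0 := htr m (E m x) (E m y)
    rw [← map_mul, ← map_mul] at h0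
    exact h0
  · -- normalization
    show τ 0 (E 0 1) = 1
    rw [map_one]
    exact hτ1
  · -- Markov condition (positive)
    intro m h
    cases m with
    | zero =>
      obtain ⟨c, rfl⟩ := atl1_scalar h
      show τ 1 (E 1 (F 1 (algebraMap K _ c) * (sq • g q 2 ⟨0, by omega⟩)))
        = τ 0 (E 0 (algebraMap K _ c))
      have hg : E 1 (g q 2 ⟨0, by omega⟩) = gA q 1 ⟨0, by omega⟩ :=
        (hE 1 le_rfl).1 ⟨0, by omega⟩
      have hM0 := hτM 0 1
      rw [map_one, one_mul, hτ1] at hM0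
      have hM : τ 1 (sq • gA q 1 ⟨0, by omega⟩) = 1 := hM0
      rw [AlgHom.commutes, map_mul, AlgHom.commutes, map_smul, hg, AlgHom.commutes,
        ← Algebra.smul_def, map_smul]
      show c • τ 1 (sq • gA q 1 ⟨0, by omega⟩) = τ 0 (algebraMap K _ c)
      rw [hM, Algebra.algebraMap_eq_smul_one, map_smul, hτ1]
    | succ k =>
      have hEFh := DFunLike.congr_fun (keyEF k) h
      simp only [AlgHom.comp_apply] at hEFh
      show τ (k+2) (E (k+2) (F (k+2) h * (sq • g q (k+3) ⟨k+1, by omega⟩)))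
        = τ (k+1) (E (k+1) h)
      have hg : E (k+2) (g q (k+3) ⟨k+1, by omega⟩) = gA q (k+2) (Fin.last (k+1)) :=
        (hE (k+2) (by omega)).1 ⟨k+1, by omega⟩
      rw [map_mul, map_smul, hEFh, hg]
      exact hτM (k+1) (E (k+1) h)
  · -- Markov condition (inverse)
    intro m h
    cases m with
    | zero =>
      obtain ⟨c, rfl⟩ := atl1_scalar h
      show τ 1 (E 1 (F 1 (algebraMap K _ c) * (Ring.inverse sq • qinv q (g q 2 ⟨0, by omega⟩))))
        = τ 0 (E 0 (algebraMap K _ c))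
      have hg : E 1 (g q 2 ⟨0, by omega⟩) = gA q 1 ⟨0, by omega⟩ :=
        (hE 1 le_rfl).1 ⟨0, by omega⟩
      have hM0 := hτM' 0 1
      rw [map_one, one_mul, hτ1] at hM0
      have hM : τ 1 (Ring.inverse sq • qinv q (gA q 1 ⟨0, by omega⟩)) = 1 := hM0
      rw [AlgHom.commutes, map_mul, AlgHom.commutes, map_smul, map_qinv, hg, AlgHom.commutes,
        ← Algebra.smul_def, map_smul]
      show c • τ 1 (Ring.inverse sq • qinv q (gA q 1 ⟨0, by omega⟩)) = τ 0 (algebraMap K _ c)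
      rw [hM, Algebra.algebraMap_eq_smul_one, map_smul, hτ1]
    | succ k =>
      have hEFh := DFunLike.congr_fun (keyEF k) h
      simp only [AlgHom.comp_apply] at hEFh
      show τ (k+2) (E (k+2) (F (k+2) h * (Ring.inverse sq • qinv q (g q (k+3) ⟨k+1, by omega⟩))))
        = τ (k+1) (E (k+1) h)
      have hg : E (k+2) (g q (k+3) ⟨k+1, by omega⟩) = gA q (k+2) (Fin.last (k+1)) :=
        (hE (k+2) (by omega)).1 ⟨k+1, by omega⟩
      rw [map_mul, map_smul, map_qinv, hEFh, hg]
      exact hτM' (k+1) (E (k+1) h)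
  · -- Dynkin invariance
    intro m x
    cases m with
    | zero =>
      obtain ⟨c, rfl⟩ := atl1_scalar x
      show τ 0 (E 0 (ψ 1 (algebraMap K _ c))) = τ 0 (E 0 (algebraMap K _ c))
      rw [AlgEquiv.commutes]
    | succ k =>
      have hx := DFunLike.congr_fun (keyPsi k) x
      simp only [AlgHom.comp_apply, AlgEquiv.toAlgHom_eq_coe, AlgHom.coe_coe] at hx
      change E (k+1) (ψ (k+2) x) = _ at hx
      show τ (k+1) (E (k+1) (ψ (k+2) x)) = τ (k+1) (E (k+1) x)
      rw [hx]
      show τ (k+1) (W q (k+1) (k+1) le_rfl * E (k+1) x * Winv q (k+1) (k+1) le_rfl)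
        = τ (k+1) (E (k+1) x)
      rw [htr (k+1) (W q (k+1) (k+1) le_rfl * E (k+1) x) (Winv q (k+1) (k+1) le_rfl),
        ← mul_assoc, Winv_mul_W hq, one_mul]
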